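/- Let C ∈ (ℝ ∪ {−∞})^{n×n}. The inequality C x ≤ x has a regular solution x ∈ ℝⁿ if and only if Tr(C) ≤ 𝟙, and in that case the regular solutions are exactly the vectors of the form x = C* u with u ∈ ℝⁿ a regular vector. -/

import Mathlib

open Finset

noncomputable section

namespace MaxPlus

/-- Max-plus multiplicative inverse: `-a` for real `a`, `⊥` for `⊥`. -/
def tinv (a : WithBot ℝ) : WithBot ℝ := WithBot.map (fun r => -r) a

/-- Max-plus rational power `a^(1/k) = a / k`. -/
def trt (a : WithBot ℝ) (k : ℕ) : WithBot ℝ := WithBot.map (fun r => r / (k : ℝ)) a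

/-- A vector is regular if it has no `⊥` (= -∞) entries. -/
def Reg {n : ℕ} (x : Fin n → WithBot ℝ) : Prop := ∀ i, x i ≠ ⊥

/-- `cdot q x = q⁻ x`, the max-plus product of the conjugate row vector `q⁻` with `x`. -/
def cdot {n : ℕ} (q x : Fin n → WithBot ℝ) : WithBot ℝ :=
  Finset.univ.sup fun i => tinv (q i) + x i

/-- Max-plus matrix-vector product. -/
def mulVec {m n : ℕ} (A : Matrix (Fin m) (Fin n) (WithBot ℝ)) (x : Fin n → WithBot ℝ) :
    Fin m → WithBot ℝ := fun i => Finset.univ.sup fun j => A i j + x j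

/-- Max-plus matrix product. -/
def tmul {l m n : ℕ} (A : Matrix (Fin l) (Fin m) (WithBot ℝ))
    (B : Matrix (Fin m) (Fin n) (WithBot ℝ)) : Matrix (Fin l) (Fin n) (WithBot ℝ) :=
  fun i j => Finset.univ.sup fun k => A i k + B k j

/-- Multiplicative conjugate transpose of a matrix. -/
def conjM {m n : ℕ} (A : Matrix (Fin m) (Fin n) (WithBot ℝ)) :
    Matrix (Fin n) (Fin m) (WithBot ℝ) := fun i j => tinv (A j i)

/-- Max-plus identity matrix. -/
def tId {n : ℕ} : Matrix (Fin n) (Fin n) (WithBot ℝ) := fun i j => if i = j then 0 else ⊥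

/-- Max-plus matrix power. -/
def tpow {n : ℕ} (A : Matrix (Fin n) (Fin n) (WithBot ℝ)) : ℕ → Matrix (Fin n) (Fin n) (WithBot ℝ)
  | 0 => tId
  | k + 1 => tmul A (tpow A k)

/-- Max-plus trace. -/
def ttr {n : ℕ} (A : Matrix (Fin n) (Fin n) (WithBot ℝ)) : WithBot ℝ :=
  Finset.univ.sup fun i => A i i

/-- `Tr(A) = tr A ⊕ tr A² ⊕ ⋯ ⊕ tr Aⁿ`. -/
def TrOp {n : ℕ} (A : Matrix (Fin n) (Fin n) (WithBot ℝ)) : WithBot ℝ :=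
  (Finset.Icc 1 n).sup fun m => ttr (tpow A m)

/-- Kleene star `A* = I ⊕ A ⊕ ⋯ ⊕ A^(n-1)`. -/
def kstar {n : ℕ} (A : Matrix (Fin n) (Fin n) (WithBot ℝ)) : Matrix (Fin n) (Fin n) (WithBot ℝ) :=
  fun i j => (Finset.range n).sup fun k => tpow A k i j

/-- Max-plus spectral radius `λ = ⊕_{m=1}^n (tr A^m)^(1/m)`. -/
def specRad {n : ℕ} (A : Matrix (Fin n) (Fin n) (WithBot ℝ)) : WithBot ℝ :=
  (Finset.Icc 1 n).sup fun m => trt (ttr (tpow A m)) m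

/-- `prodAB A B [i₁, …, i_k] = A B^{i₁} A B^{i₂} ⋯ A B^{i_k}`. -/
def prodAB {n : ℕ} (A B : Matrix (Fin n) (Fin n) (WithBot ℝ)) :
    List ℕ → Matrix (Fin n) (Fin n) (WithBot ℝ)
  | [] => tId
  | i :: t => tmul (tmul A (tpow B i)) (prodAB A B t)

/-- The all-ones (all-`𝟙 = 0`) vector. -/
def onesV (n : ℕ) : Fin n → WithBot ℝ := fun _ => 0

end MaxPlus

open MaxPlus

namespace MP
lemma wb_add_sup (a b c : WithBot ℝ) : a + (b ⊔ c) = (a + b) ⊔ (a + c) := by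
  rcases le_total b c with h | h
  · rw [sup_eq_right.mpr h, sup_eq_right.mpr (add_le_add_right h a)]
  · rw [sup_eq_left.mpr h, sup_eq_left.mpr (add_le_add_right h a)]
lemma wb_sup_add (a b c : WithBot ℝ) : (b ⊔ c) + a = (b + a) ⊔ (c + a) := by
  rw [add_comm, wb_add_sup, add_comm b a, add_comm c a]
lemma add_finsup {α : Type*} (s : Finset α) (a : WithBot ℝ) (f : α → WithBot ℝ) :
    a + s.sup f = s.sup fun x => a + f x := by
  classical
  induction s using Finset.induction with
  | empty => simp
  | insert x s hx ih => simp [Finset.sup_insert, wb_add_sup, ih]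
lemma finsup_add {α : Type*} (s : Finset α) (a : WithBot ℝ) (f : α → WithBot ℝ) :
    s.sup f + a = s.sup fun x => f x + a := by
  classical
  induction s using Finset.induction with
  | empty => simp
  | insert x s hx ih => simp [Finset.sup_insert, wb_sup_add, ih]

variable {n : ℕ} (C : Matrix (Fin n) (Fin n) (WithBot ℝ))

def wt : List (Fin n) → WithBot ℝ
  | [] => 0
  | [_] => 0
  | a :: b :: t => C a b + wt (b :: t)

lemma wt_append (s₁ : List (Fin n)) (a : Fin n) (s₂ : List (Fin n)) :
    wt C (s₁ ++ a :: s₂) = wt C (s₁ ++ [a]) + wt C (a :: s₂) := by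
  induction s₁ with
  | nil => simp [wt]
  | cons x t ih =>
    cases t with
    | nil => simp [wt, add_zero]
    | cons y t' =>
      simp only [List.cons_append] at ih ⊢
      simp only [wt, ih, add_assoc]

lemma tpow_succ_apply (m : ℕ) (i j : Fin n) :
    tpow C (m + 1) i j = Finset.univ.sup fun k => C i k + tpow C m k j := rfl

lemma wt_le_tpow : ∀ (l : List (Fin n)) (i j : Fin n),
    wt C (i :: l ++ [j]) ≤ tpow C (l.length + 1) i j := by
  intro l
  induction l with
  | nil =>
    intro i j
    have : wt C (i :: [] ++ [j]) = C i j := by simp [wt]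
    rw [this]
    have h0 : C i j = C i j + tpow C 0 j j := by simp [tpow, tId]
    rw [h0]
    exact le_trans (Finset.le_sup (f := fun k => C i k + tpow C 0 k j) (Finset.mem_univ j))
      (le_of_eq (tpow_succ_apply C 0 i j).symm)
  | cons k t ih =>
    intro i j
    have : wt C (i :: (k :: t) ++ [j]) = C i k + wt C (k :: t ++ [j]) := by simp [wt]
    rw [this]
    calc C i k + wt C (k :: t ++ [j]) ≤ C i k + tpow C (t.length + 1) k j :=
          add_le_add_right (ih k j) _
      _ ≤ Finset.univ.sup (fun k' => C i k' + tpow C (t.length + 1) k' j) :=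
          Finset.le_sup (f := fun k' => C i k' + tpow C (t.length + 1) k' j)
            (Finset.mem_univ k)
      _ = tpow C ((k :: t).length + 1) i j := by
          rw [List.length_cons, tpow_succ_apply]

lemma exists_wt : ∀ (m : ℕ) (i j : Fin n),
    ∃ l : List (Fin n), l.length = m ∧ tpow C (m + 1) i j ≤ wt C (i :: l ++ [j]) := by
  intro m
  induction m with
  | zero =>
    intro i j
    refine ⟨[], rfl, ?_⟩
    have : wt C (i :: [] ++ [j]) = C i j := by simp [wt]
    rw [this, tpow_succ_apply C 0 i j]
    refine Finset.sup_le fun k _ => ?_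
    by_cases hk : k = j
    · subst hk; simp [tpow, tId]
    · simp [tpow, tId, hk]
  | succ m ih =>
    intro i j
    obtain ⟨k, -, hk⟩ := Finset.exists_mem_eq_sup (Finset.univ : Finset (Fin n))
      ⟨i, Finset.mem_univ i⟩ (fun k => C i k + tpow C (m + 1) k j)
    obtain ⟨l, hl, hle⟩ := ih k j
    refine ⟨k :: l, by simp [hl], ?_⟩
    have h1 : tpow C (m + 2) i j = C i k + tpow C (m + 1) k j := hk
    have h2 : wt C (i :: (k :: l) ++ [j]) = C i k + wt C (k :: l ++ [j]) := by simp [wt]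
    rw [h1, h2]
    exact add_le_add_right hle _

lemma exists_dup {α : Type*} : ∀ (l : List α), ¬ l.Nodup →
    ∃ (a : α) (s₁ s₂ s₃ : List α), l = s₁ ++ a :: s₂ ++ a :: s₃ := by
  intro l
  induction l with
  | nil => intro h; exact absurd List.nodup_nil h
  | cons x t ih =>
    intro h
    rw [List.nodup_cons] at h
    push_neg at h
    by_cases hx : x ∈ t
    · obtain ⟨s₂, s₃, rfl⟩ := List.append_of_mem hx
      exact ⟨x, [], s₂, s₃, by simp⟩
    · obtain ⟨a, s₁, s₂, s₃, rfl⟩ := ih (h hx)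
      exact ⟨a, x :: s₁, s₂, s₃, by simp⟩


lemma tpow_lt_le_kstar (m : ℕ) (hm : m < n) (i j : Fin n) :
    tpow C m i j ≤ kstar C i j :=
  Finset.le_sup (f := fun k => tpow C k i j) (Finset.mem_range.mpr hm)

lemma cyc_le (h : TrOp C ≤ 0) (l : List (Fin n)) (a : Fin n) (hlen : l.length + 1 ≤ n) :
    wt C (a :: l ++ [a]) ≤ 0 := by
  calc wt C (a :: l ++ [a]) ≤ tpow C (l.length + 1) a a := wt_le_tpow C l a a
    _ ≤ ttr (tpow C (l.length + 1)) :=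
        Finset.le_sup (f := fun i => tpow C (l.length + 1) i i) (Finset.mem_univ a)
    _ ≤ TrOp C := Finset.le_sup (f := fun m => ttr (tpow C m))
        (Finset.mem_Icc.mpr ⟨Nat.succ_le_succ (Nat.zero_le _), hlen⟩)
    _ ≤ 0 := h

lemma walk_le_kstar (h : TrOp C ≤ 0) :
    ∀ (m : ℕ) (l : List (Fin n)), l.length = m →
      ∀ i j : Fin n, wt C (i :: l ++ [j]) ≤ kstar C i j := by
  intro m
  induction m using Nat.strong_induction_on with
  | _ m ih =>
  intro l hl i j
  by_cases hsmall : l.length + 2 ≤ n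
  · exact le_trans (wt_le_tpow C l i j) (tpow_lt_le_kstar C _ (by omega) i j)
  · have hn : 0 < n := i.pos
    set s : List (Fin n) := i :: l ++ [j] with hs
    have hslen : s.length = l.length + 2 := by simp [hs]
    clear_value s
    have htake : (s.take (n+1)).length = n + 1 := by
      rw [List.length_take]; omega
    have hnd : ¬ (s.take (n+1)).Nodup := by
      intro hnd
      have := hnd.length_le_card
      rw [htake, Fintype.card_fin] at this
      omega
    obtain ⟨a, s₁, s₂, s₃', hdec⟩ := exists_dup _ hnd
    have hsdec : s = s₁ ++ (a :: (s₂ ++ (a :: (s₃' ++ s.drop (n+1))))) := by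
      conv_lhs => rw [← List.take_append_drop (n+1) s]
      rw [hdec]; simp
    set s₃ : List (Fin n) := s₃' ++ s.drop (n+1) with hs₃
    clear_value s₃
    have hlen2 : s₂.length + 1 ≤ n := by
      have h1 : (s₁ ++ a :: s₂ ++ a :: s₃').length = n + 1 := by rw [← hdec, htake]
      simp only [List.length_append, List.length_cons] at h1
      omega
    have hltot : l.length = s₁.length + s₂.length + s₃.length := by
      have h2 := congrArg List.length hsdec
      rw [hslen] at h2
      simp only [List.length_append, List.length_cons] at h2
      omega
    have hcyc : wt C ((a :: s₂) ++ [a]) ≤ 0 := cyc_le C h s₂ a hlen2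
    have hwt : wt C s ≤ wt C (s₁ ++ (a :: s₃)) := by
      rw [hsdec, wt_append C s₁ a (s₂ ++ (a :: s₃)),
          show (a :: (s₂ ++ (a :: s₃))) = (a :: s₂) ++ (a :: s₃) by simp,
          wt_append C (a :: s₂) a s₃, wt_append C s₁ a s₃]
      refine add_le_add_right ?_ _
      calc wt C ((a :: s₂) ++ [a]) + wt C (a :: s₃) ≤ 0 + wt C (a :: s₃) :=
            add_le_add_left hcyc _
        _ = wt C (a :: s₃) := zero_add _
    -- now case analysis on s₁ and s₃
    rcases s₁ with _ | ⟨c, s₁'⟩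
    · -- s₁ = [], so a = i
      have hia : i = a := by
        have := hsdec
        rw [hs] at this
        simp only [List.nil_append, List.cons_append] at this
        exact (List.cons.injEq _ _ _ _).mp this |>.1
      rcases List.eq_nil_or_concat s₃ with h3 | ⟨t, b, h3⟩
      · -- s₃ = [] : whole thing a cycle, i = j
        have hja : j = a := by
          have h1 : s = (a :: s₂) ++ [a] := by rw [hsdec, h3]; simp
          have h2 : (i :: l) ++ [j] = (a :: s₂) ++ [a] := hs.symm.trans h1
          have := (List.append_inj' h2 rfl).2
          simpa using this
        have h0 : wt C (([] : List (Fin n)) ++ (a :: s₃)) = 0 := by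
          rw [h3]; simp [wt]
        rw [h0] at hwt
        refine le_trans hwt ?_
        have : (0 : WithBot ℝ) = tpow C 0 i j := by
          simp [tpow, tId, hia, hja]
        rw [this]
        exact tpow_lt_le_kstar C 0 hn i j
      · -- s₃ = t ++ [b], b = j
        have hbj : b = j := by
          have h1 : s = (a :: (s₂ ++ (a :: t))) ++ [b] := by
            rw [hsdec, h3]; simp [List.concat_eq_append]
          have h2 : (i :: l) ++ [j] = (a :: (s₂ ++ (a :: t))) ++ [b] := hs.symm.trans h1
          have := (List.append_inj' h2 rfl).2
          simpa using (this.symm)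
        have hred : ([] : List (Fin n)) ++ (a :: s₃) = i :: t ++ [j] := by
          rw [h3, hia, hbj]; simp [List.concat_eq_append]
        rw [hred] at hwt
        refine le_trans hwt (ih t.length ?_ t rfl i j)
        rw [← hl, hltot, h3]
        simp [List.concat_eq_append]
        omega
    · -- s₁ = c :: s₁', c = i
      have hci : c = i := by
        have := hsdec
        rw [hs] at this
        simp only [List.cons_append] at this
        exact ((List.cons.injEq _ _ _ _).mp this |>.1).symm
      rcases List.eq_nil_or_concat s₃ with h3 | ⟨t, b, h3⟩
      · -- s₃ = [], a = j
        have haj : a = j := by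
          have h1 : s = ((c :: s₁') ++ (a :: s₂)) ++ [a] := by
            rw [hsdec, h3]; simp
          have h2 : (i :: l) ++ [j] = ((c :: s₁') ++ (a :: s₂)) ++ [a] := hs.symm.trans h1
          have := (List.append_inj' h2 rfl).2
          simpa using (this.symm)
        have hred : (c :: s₁') ++ (a :: s₃) = i :: s₁' ++ [j] := by
          rw [h3, hci, haj]
        rw [hred] at hwt
        refine le_trans hwt (ih s₁'.length ?_ s₁' rfl i j)
        rw [← hl, hltot]
        simp
        omega
      · -- s₃ = t ++ [b], b = j
        have hbj : b = j := by
          have h1 : s = ((c :: s₁') ++ (a :: (s₂ ++ (a :: t)))) ++ [b] := by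
            rw [hsdec, h3]; simp [List.concat_eq_append]
          have h2 : (i :: l) ++ [j] = ((c :: s₁') ++ (a :: (s₂ ++ (a :: t)))) ++ [b] :=
            hs.symm.trans h1
          have := (List.append_inj' h2 rfl).2
          simpa using (this.symm)
        have hred : (c :: s₁') ++ (a :: s₃) = i :: (s₁' ++ (a :: t)) ++ [j] := by
          rw [h3, hci, hbj]
          simp [List.concat_eq_append]
        rw [hred] at hwt
        refine le_trans hwt (ih (s₁' ++ (a :: t)).length ?_ _ rfl i j)
        rw [← hl, hltot, h3]
        simp [List.concat_eq_append]
        omega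

lemma tpow_succ_le_kstar (h : TrOp C ≤ 0) (m : ℕ) (i j : Fin n) :
    tpow C (m + 1) i j ≤ kstar C i j := by
  obtain ⟨l, hl, hle⟩ := exists_wt C m i j
  exact le_trans hle (walk_le_kstar C h l.length l rfl i j)

lemma mulVec_assoc (A B : Matrix (Fin n) (Fin n) (WithBot ℝ)) (x : Fin n → WithBot ℝ) :
    mulVec (tmul A B) x = mulVec A (mulVec B x) := by
  funext i
  show (Finset.univ.sup fun j => tmul A B i j + x j)
      = Finset.univ.sup fun k => A i k + mulVec B x k
  simp only [tmul, mulVec]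
  simp_rw [finsup_add, add_finsup, add_assoc]
  rw [Finset.sup_comm]

lemma mulVec_mono_vec (A : Matrix (Fin n) (Fin n) (WithBot ℝ)) {x y : Fin n → WithBot ℝ}
    (hxy : ∀ j, x j ≤ y j) (i : Fin n) : mulVec A x i ≤ mulVec A y i :=
  Finset.sup_mono_fun fun j _ => add_le_add_right (hxy j) _

lemma mulVec_tpow_le (x : Fin n → WithBot ℝ) (hx : ∀ i, mulVec C x i ≤ x i) :
    ∀ (m : ℕ) (i : Fin n), mulVec (tpow C m) x i ≤ x i := by
  intro m
  induction m with
  | zero =>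
    intro i
    refine Finset.sup_le fun j _ => ?_
    by_cases hj : i = j
    · subst hj; simp [tpow, tId]
    · simp [tpow, tId, hj]
  | succ m ihm =>
    intro i
    have heq : mulVec (tpow C (m + 1)) x = mulVec C (mulVec (tpow C m) x) :=
      mulVec_assoc C (tpow C m) x
    rw [heq]
    exact le_trans (mulVec_mono_vec C (fun j => ihm j) i) (hx i)

lemma sol_TrOp (x : Fin n → WithBot ℝ) (hreg : Reg x) (hx : ∀ i, mulVec C x i ≤ x i) :
    TrOp C ≤ 0 := by
  refine Finset.sup_le fun m hm => Finset.sup_le fun i _ => ?_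
  obtain ⟨r, hr⟩ := WithBot.ne_bot_iff_exists.mp (hreg i)
  have h1 : tpow C m i i + x i ≤ x i :=
    le_trans (Finset.le_sup (f := fun j => tpow C m i j + x j) (Finset.mem_univ i))
      (mulVec_tpow_le C x hx m i)
  rw [← hr] at h1
  cases h' : tpow C m i i with
  | bot => exact bot_le
  | coe b =>
    rw [h'] at h1
    have hb : (b : ℝ) + r ≤ r := by exact_mod_cast h1
    have : (b : ℝ) ≤ 0 := by linarith
    exact_mod_cast this

lemma kstar_diag (i : Fin n) : (0 : WithBot ℝ) ≤ kstar C i i := by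
  have := tpow_lt_le_kstar C 0 i.pos i i
  simpa [tpow, tId] using this

lemma le_mulVec_kstar (u : Fin n → WithBot ℝ) (i : Fin n) :
    u i ≤ mulVec (kstar C) u i := by
  have h1 : (0 : WithBot ℝ) + u i ≤ kstar C i i + u i := add_le_add_left (kstar_diag C i) _
  rw [zero_add] at h1
  exact le_trans h1 (Finset.le_sup (f := fun j => kstar C i j + u j) (Finset.mem_univ i))

lemma reg_mulVec_kstar (u : Fin n → WithBot ℝ) (hu : Reg u) : Reg (mulVec (kstar C) u) :=
  fun i h => hu i (le_bot_iff.mp (h ▸ le_mulVec_kstar C u i))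

lemma tmul_kstar_le (h : TrOp C ≤ 0) (i j : Fin n) : tmul C (kstar C) i j ≤ kstar C i j := by
  refine Finset.sup_le fun k _ => ?_
  rw [show kstar C k j = (Finset.range n).sup fun m => tpow C m k j from rfl, add_finsup]
  refine Finset.sup_le fun m _ => ?_
  have h1 : C i k + tpow C m k j ≤ tpow C (m + 1) i j := by
    rw [tpow_succ_apply]
    exact Finset.le_sup (f := fun k' => C i k' + tpow C m k' j) (Finset.mem_univ k)
  exact le_trans h1 (tpow_succ_le_kstar C h m i j)

lemma sol_kstar (h : TrOp C ≤ 0) (u : Fin n → WithBot ℝ) (i : Fin n) :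
    mulVec C (mulVec (kstar C) u) i ≤ mulVec (kstar C) u i := by
  rw [← mulVec_assoc]
  refine Finset.sup_le fun j _ => ?_
  exact le_trans (add_le_add_left (tmul_kstar_le C h i j) (u j))
    (Finset.le_sup (f := fun j => kstar C i j + u j) (Finset.mem_univ j))

lemma fixed_point (x : Fin n → WithBot ℝ) (hx : ∀ i, mulVec C x i ≤ x i) :
    x = mulVec (kstar C) x := by
  funext i
  refine le_antisymm (le_mulVec_kstar C x i) ?_
  refine Finset.sup_le fun j _ => ?_
  show kstar C i j + x j ≤ x i
  rw [show kstar C i j = (Finset.range n).sup fun m => tpow C m i j from rfl, finsup_add]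
  refine Finset.sup_le fun m _ => ?_
  exact le_trans (Finset.le_sup (f := fun j' => tpow C m i j' + x j') (Finset.mem_univ j))
    (mulVec_tpow_le C x hx m i)

end MP
open MP

/-- the inequality `C x ≤ x` has a regular solution iff `Tr(C) ≤ 𝟙`,
and then the regular solutions are exactly the vectors `x = C* u` with `u` regular. -/
theorem stmt_16 {n : ℕ} (C : Matrix (Fin n) (Fin n) (WithBot ℝ)) :
    ((∃ x : Fin n → WithBot ℝ, Reg x ∧ ∀ i, mulVec C x i ≤ x i) ↔ TrOp C ≤ 0) ∧
      (TrOp C ≤ 0 →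
        ∀ x : Fin n → WithBot ℝ,
          ((Reg x ∧ ∀ i, mulVec C x i ≤ x i) ↔
            ∃ u : Fin n → WithBot ℝ, Reg u ∧ x = mulVec (kstar C) u)) := by
  constructor
  · constructor
    · rintro ⟨x, hreg, hx⟩
      exact sol_TrOp C x hreg hx
    · intro h
      exact ⟨mulVec (kstar C) (onesV n),
        reg_mulVec_kstar C _ (fun i => by simp [onesV]),
        fun i => sol_kstar C h _ i⟩
  · intro h x
    constructor
    · rintro ⟨hreg, hx⟩
      exact ⟨x, hreg, fixed_point C x hx⟩
    · rintro ⟨u, hu, rfl⟩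
      exact ⟨reg_mulVec_kstar C u hu, fun i => sol_kstar C h u i⟩
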